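/- arXiv:1508.06384 — 3 statements merged into one kernel-verified Lean document; each statement's English description precedes it below -/
import Mathlib

section
/- For d ≥ 3, the integral S₂(k²) = ∫_{ℝ^{d-1}} (k² + |p⊥|²) δ(k + p⊥·(1,...,1)) θ(e^{2s} - k² - |p⊥|²) d^{d-1}p⊥ equals (1/√(d-1))·[dk²/(d-1) + ((d-2)/d)(e^{2s} - dk²/(d-1))]·Ω_{d-2}·(e^{2s} - dk²/(d-1))^{(d-2)/2} for dk²/(d-1) ≤ e^{2s}. -/
open MeasureTheory Real

lemma ball_poly_integral (n : ℕ) (hn : 1 ≤ n) (a R : ℝ) (hR : 0 ≤ R) :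
    ∫ q in Metric.closedBall (0 : EuclideanSpace ℝ (Fin n)) R, (a + ‖q‖ ^ 2)
    = (Real.sqrt π ^ n / Real.Gamma (n / 2 + 1)) *
        (a * R ^ n + (n : ℝ) / ((n : ℝ) + 2) * R ^ (n + 2)) := by
  haveI : Nonempty (Fin n) := ⟨⟨0, hn⟩⟩
  haveI : Nontrivial (EuclideanSpace ℝ (Fin n)) := inferInstance
  have hdim : Module.finrank ℝ (EuclideanSpace ℝ (Fin n)) = n := by
    simp [finrank_euclideanSpace]
  have key := integral_fun_norm_addHaar (volume : Measure (EuclideanSpace ℝ (Fin n)))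
    (Set.indicator (Set.Iic R) (fun r => a + r ^ 2))
  rw [← integral_indicator (measurableSet_closedBall)]
  have heq : ∀ q : EuclideanSpace ℝ (Fin n),
      (Metric.closedBall (0 : EuclideanSpace ℝ (Fin n)) R).indicator
        (fun q => a + ‖q‖ ^ 2) q
      = Set.indicator (Set.Iic R) (fun r => a + r ^ 2) ‖q‖ := by
    intro q
    simp [Set.indicator, Metric.mem_closedBall, dist_zero_right]
  rw [show (fun q : EuclideanSpace ℝ (Fin n) =>
      (Metric.closedBall (0 : EuclideanSpace ℝ (Fin n)) R).indicator
        (fun q => a + ‖q‖ ^ 2) q) = fun q => Set.indicator (Set.Iic R) (fun r => a + r ^ 2) ‖q‖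
      from funext heq]
  rw [key, hdim]
  have hvol : (volume (Metric.ball (0 : EuclideanSpace ℝ (Fin n)) 1)).toReal
      = Real.sqrt π ^ n / Real.Gamma (n / 2 + 1) := by
    have hG : 0 < Real.Gamma ((n:ℝ)/2+1) := Real.Gamma_pos_of_pos (by positivity)
    rw [EuclideanSpace.volume_ball]
    simp [ENNReal.toReal_mul, ENNReal.toReal_ofReal
      (div_nonneg (pow_nonneg (Real.sqrt_nonneg _) _) hG.le)]
  rw [measureReal_def, hvol]
  have hint : ∫ y in Set.Ioi (0:ℝ), y ^ (n - 1) • Set.indicator (Set.Iic R) (fun r => a + r ^ 2) y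
      = a * R ^ n / n + R ^ (n + 2) / ((n:ℝ) + 2) := by
    have h1 : ∀ y : ℝ, y ^ (n - 1) • Set.indicator (Set.Iic R) (fun r => a + r ^ 2) y
        = Set.indicator (Set.Iic R) (fun y => a * y ^ (n - 1) + y ^ (n + 1)) y := by
      intro y
      by_cases hy : y ∈ Set.Iic R <;>
        simp [Set.indicator, hy, smul_eq_mul]
      · rw [show n + 1 = 2 + (n - 1) from by omega]
        ring
    simp_rw [h1]
    rw [setIntegral_indicator measurableSet_Iic, Set.Ioi_inter_Iic,
      ← intervalIntegral.integral_of_le hR,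
      intervalIntegral.integral_add (f := fun x => a * x ^ (n - 1))
        ((continuous_const.mul (continuous_pow _)).intervalIntegrable _ _)
        ((continuous_pow _).intervalIntegrable _ _),
      intervalIntegral.integral_const_mul, integral_pow, integral_pow,
      show n - 1 + 1 = n from by omega]
    rw [zero_pow (by omega), zero_pow (by omega), Nat.cast_sub hn]
    have h0 : (n : ℝ) ≠ 0 := by positivity
    have h2 : (n : ℝ) + 2 ≠ 0 := by positivity
    push_cast
    rw [sub_add_cancel]
    field_simp
    ring
  rw [hint, nsmul_eq_mul, smul_eq_mul]
  have hn' : (n : ℝ) ≠ 0 := by positivity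
  have hn2 : (n : ℝ) + 2 ≠ 0 := by positivity
  field_simp

/-- Integral approximation S₂(k²): with the delta constraint k + p⊥·(1,…,1)=0
resolved (p⊥ = -(k/(d-1))n + q with q ⊥ n, so |p⊥|² = k²/(d-1) + |q|²), the
integral of (k² + |p⊥|²) over the constrained region, divided by √(d-1), equals
(1/√(d-1))·[dk²/(d-1) + ((d-2)/d)(e^{2s} - dk²/(d-1))]·Ω_{d-2}·(e^{2s} - dk²/(d-1))^{(d-2)/2},
where Ω_{d-2} = π^{(d-2)/2}/Γ(d/2) is the volume of the unit (d-2)-ball. -/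
theorem stmt_4 (d : ℕ) (hd : 3 ≤ d) (s k : ℝ)
    (hk : (d : ℝ) * k ^ 2 / ((d : ℝ) - 1) ≤ Real.exp (2 * s)) :
    (1 / Real.sqrt ((d : ℝ) - 1)) *
      (∫ q in {q : EuclideanSpace ℝ (Fin (d - 2)) |
          k ^ 2 + (k ^ 2 / ((d : ℝ) - 1) + ‖q‖ ^ 2) ≤ Real.exp (2 * s)},
        (k ^ 2 + (k ^ 2 / ((d : ℝ) - 1) + ‖q‖ ^ 2)))
    = (1 / Real.sqrt ((d : ℝ) - 1)) *
        ((d : ℝ) * k ^ 2 / ((d : ℝ) - 1) +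
          (((d : ℝ) - 2) / (d : ℝ)) *
            (Real.exp (2 * s) - (d : ℝ) * k ^ 2 / ((d : ℝ) - 1))) *
        (Real.pi ^ (((d : ℝ) - 2) / 2) / Real.Gamma ((d : ℝ) / 2)) *
        (Real.exp (2 * s) - (d : ℝ) * k ^ 2 / ((d : ℝ) - 1)) ^ (((d : ℝ) - 2) / 2) := by
  have hd3 : (3 : ℝ) ≤ (d : ℝ) := by exact_mod_cast hd
  have hd1 : (d : ℝ) - 1 ≠ 0 := by linarith
  set E := Real.exp (2 * s) with hE
  set C := (d : ℝ) * k ^ 2 / ((d : ℝ) - 1) with hC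
  have hCeq : k ^ 2 + k ^ 2 / ((d : ℝ) - 1) = C := by
    rw [hC]; field_simp; ring
  have hx : 0 ≤ E - C := by linarith
  set R := Real.sqrt (E - C) with hRdef
  have hR : 0 ≤ R := Real.sqrt_nonneg _
  have hR2 : R ^ 2 = E - C := Real.sq_sqrt hx
  have hset : {q : EuclideanSpace ℝ (Fin (d - 2)) |
      k ^ 2 + (k ^ 2 / ((d : ℝ) - 1) + ‖q‖ ^ 2) ≤ E}
      = Metric.closedBall (0 : EuclideanSpace ℝ (Fin (d - 2))) R := by
    ext q
    simp only [Set.mem_setOf_eq, Metric.mem_closedBall, dist_zero_right]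
    rw [hRdef, Real.le_sqrt (norm_nonneg q) hx]
    constructor <;> intro h <;> nlinarith [hCeq]
  have hfun : ∀ q : EuclideanSpace ℝ (Fin (d - 2)),
      k ^ 2 + (k ^ 2 / ((d : ℝ) - 1) + ‖q‖ ^ 2) = C + ‖q‖ ^ 2 := by
    intro q; rw [← hCeq]; ring
  have hn : 1 ≤ d - 2 := by omega
  have hcast : ((d - 2 : ℕ) : ℝ) = (d : ℝ) - 2 := by
    push_cast [Nat.cast_sub (by omega : 2 ≤ d)]; ring
  calc (1 / Real.sqrt ((d : ℝ) - 1)) *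
      (∫ q in {q : EuclideanSpace ℝ (Fin (d - 2)) |
          k ^ 2 + (k ^ 2 / ((d : ℝ) - 1) + ‖q‖ ^ 2) ≤ E},
        (k ^ 2 + (k ^ 2 / ((d : ℝ) - 1) + ‖q‖ ^ 2)))
      = (1 / Real.sqrt ((d : ℝ) - 1)) *
        (∫ q in Metric.closedBall (0 : EuclideanSpace ℝ (Fin (d - 2))) R, (C + ‖q‖ ^ 2)) := by
        rw [hset]; congr 1; exact setIntegral_congr_fun measurableSet_closedBall
          (fun q _ => hfun q)
    _ = (1 / Real.sqrt ((d : ℝ) - 1)) *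
        ((Real.sqrt π ^ (d - 2) / Real.Gamma ((d - 2 : ℕ) / 2 + 1)) *
          (C * R ^ (d - 2) + ((d - 2 : ℕ) : ℝ) / (((d - 2 : ℕ) : ℝ) + 2) * R ^ (d - 2 + 2))) := by
        rw [ball_poly_integral (d - 2) hn C R hR]
    _ = _ := by
        have hGamma : Real.Gamma (((d - 2 : ℕ) : ℝ) / 2 + 1) = Real.Gamma ((d : ℝ) / 2) := by
          rw [hcast]; ring_nf
        have hpi : Real.sqrt π ^ (d - 2) = π ^ (((d : ℝ) - 2) / 2) := by
          rw [Real.sqrt_eq_rpow, ← Real.rpow_natCast (π ^ ((1:ℝ)/2)) (d - 2),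
            ← Real.rpow_mul Real.pi_nonneg, hcast]
          ring_nf
        have hRn : R ^ (d - 2) = (E - C) ^ (((d : ℝ) - 2) / 2) := by
          rw [hRdef, Real.sqrt_eq_rpow, ← Real.rpow_natCast ((E - C) ^ ((1:ℝ)/2)) (d - 2),
            ← Real.rpow_mul hx, hcast]
          ring_nf
        have hRn2 : R ^ (d - 2 + 2) = (E - C) ^ (((d : ℝ) - 2) / 2) * (E - C) := by
          rw [pow_add, hRn, hR2]
        rw [hGamma, hpi, hRn, hRn2]
        have hG : 0 < Real.Gamma ((d : ℝ) / 2) := Real.Gamma_pos_of_pos (by positivity)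
        have hd0 : (d : ℝ) ≠ 0 := by linarith
        rw [hcast]
        field_simp
        rw [sub_add_cancel]
        field_simp
end

section
/- The Jacobian of (β_m, β_λ) with β_m = -2x - 48y/(1+x)², β_λ = -4y + 56y²/(1+x)³, evaluated at (x,y) = (-12/19, 49/13718), equals the matrix [[34/7, -17328/49],[-42/361, 4]], whose eigenvalues are 76/7 and -2. -/
/-- The Jacobian of β_m = -2x - 48y/(1+x)², β_λ = -4y + 56y²/(1+x)³ at the
non-Gaussian fixed point (-12/19, 49/13718) equals [[34/7, -17328/49],
[-42/361, 4]], whose eigenvalues are 76/7 and -2. -/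
theorem stmt_12 :
    HasDerivAt (fun x : ℝ => -2 * x - 48 * (49 / 13718) / (1 + x) ^ 2)
      (34 / 7) (-12 / 19) ∧
    HasDerivAt (fun y : ℝ => -2 * (-12 / 19) - 48 * y / (1 + (-12 / 19)) ^ 2)
      (-17328 / 49) (49 / 13718) ∧
    HasDerivAt (fun x : ℝ => -4 * (49 / 13718) + 56 * (49 / 13718) ^ 2 / (1 + x) ^ 3)
      (-42 / 361) (-12 / 19) ∧
    HasDerivAt (fun y : ℝ => -4 * y + 56 * y ^ 2 / (1 + (-12 / 19)) ^ 3)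
      (4 : ℝ) (49 / 13718) ∧
    Matrix.det ((Matrix.of ![![(34 / 7 : ℝ), -17328 / 49], ![-42 / 361, 4]])
      - (76 / 7 : ℝ) • (1 : Matrix (Fin 2) (Fin 2) ℝ)) = 0 ∧
    Matrix.det ((Matrix.of ![![(34 / 7 : ℝ), -17328 / 49], ![-42 / 361, 4]])
      - (-2 : ℝ) • (1 : Matrix (Fin 2) (Fin 2) ℝ)) = 0 := by
  have hpow2 : HasDerivAt (fun x : ℝ => (1 + x) ^ 2)
      (2 * (1 + (-12/19 : ℝ))) (-12/19) := by
    simpa using (((hasDerivAt_id (-12/19 : ℝ)).const_add 1).fun_pow 2)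
  have hpow3 : HasDerivAt (fun x : ℝ => (1 + x) ^ 3)
      (3 * (1 + (-12/19 : ℝ)) ^ 2) (-12/19) := by
    simpa using (((hasDerivAt_id (-12/19 : ℝ)).const_add 1).fun_pow 3)
  have hne2 : ((1 + (-12/19 : ℝ)) ^ 2) ≠ 0 := by norm_num
  have hne3 : ((1 + (-12/19 : ℝ)) ^ 3) ≠ 0 := by norm_num
  refine ⟨?_, ?_, ?_, ?_, ?_, ?_⟩
  · have := ((hasDerivAt_id (-12/19 : ℝ)).const_mul (-2)).fun_sub
      ((hasDerivAt_const (-12/19 : ℝ) (48 * (49 / 13718) : ℝ)).fun_div hpow2 hne2)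
    refine this.congr_deriv ?_
    norm_num
  · have := ((hasDerivAt_const (49/13718 : ℝ)
        (-2 * (-12 / 19) : ℝ))).fun_sub
      (((hasDerivAt_id (49/13718 : ℝ)).const_mul 48).div_const ((1 + (-12/19 : ℝ)) ^ 2))
    refine this.congr_deriv ?_
    norm_num
  · have := (hasDerivAt_const (-12/19 : ℝ) (-4 * (49 / 13718) : ℝ)).fun_add
      ((hasDerivAt_const (-12/19 : ℝ) (56 * (49 / 13718) ^ 2 : ℝ)).fun_div hpow3 hne3)
    refine this.congr_deriv ?_
    norm_num
  · have := ((hasDerivAt_id (49/13718 : ℝ)).const_mul (-4)).fun_add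
      ((((hasDerivAt_id (49/13718 : ℝ)).fun_pow 2).const_mul 56).div_const
        ((1 + (-12/19 : ℝ)) ^ 3))
    refine this.congr_deriv ?_
    norm_num
  · simp [Matrix.det_fin_two, Matrix.smul_apply, Matrix.one_apply, Matrix.sub_apply]
    norm_num
  · simp [Matrix.det_fin_two, Matrix.smul_apply, Matrix.one_apply, Matrix.sub_apply]
    norm_num
end

section
/- Poisson summation for the theta function: for α > 0 and β ∈ ℝ, Σ_{n∈ℤ} e^{-αn²} e^{iβn} = √(π/α) Σ_{n∈ℤ} e^{-(β+2πn)²/(4α)}. -/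
open Real Complex

/-- Poisson summation for the theta function: for α > 0 and β ∈ ℝ,
Σ_{n∈ℤ} e^{-αn²} e^{iβn} = √(π/α) Σ_{n∈ℤ} e^{-(β+2πn)²/(4α)}. -/
theorem stmt_14 (α β : ℝ) (hα : 0 < α) :
    ∑' n : ℤ, (Real.exp (-α * (n : ℝ) ^ 2) : ℂ) * Complex.exp ((β : ℂ) * (n : ℂ) * Complex.I)
      = (Real.sqrt (Real.pi / α) : ℂ) *
        ∑' n : ℤ, (Real.exp (-(β + 2 * Real.pi * (n : ℝ)) ^ 2 / (4 * α)) : ℂ) := by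
  have hπ := Real.pi_pos
  have ha : (0:ℝ) < (α/π : ℝ) := div_pos hα hπ
  have ha' : (0 : ℝ) < ((α/π : ℝ) : ℂ).re := by simpa using ha
  have key := Complex.tsum_exp_neg_quadratic (a := ((α/π : ℝ) : ℂ)) ha'
      (Complex.I * β / (2 * π))
  have hπ0 : (π : ℂ) ≠ 0 := by exact_mod_cast hπ.ne'
  -- rewrite LHS of key
  have hL : (∑' n : ℤ, Complex.exp (-π * ((α/π : ℝ) : ℂ) * (n:ℂ) ^ 2
        + 2 * π * (Complex.I * β / (2 * π)) * (n:ℂ)))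
      = ∑' n : ℤ, (Real.exp (-α * (n : ℝ) ^ 2) : ℂ)
          * Complex.exp ((β : ℂ) * (n : ℂ) * Complex.I) := by
    refine tsum_congr fun n => ?_
    rw [Complex.exp_add, Complex.ofReal_exp]
    congr 1
    · congr 1
      push_cast
      field_simp
    · congr 1
      field_simp
  -- rewrite RHS inner sum of key
  have hR : (∑' n : ℤ, Complex.exp (-π / ((α/π : ℝ) : ℂ)
        * ((n:ℂ) + Complex.I * (Complex.I * β / (2 * π))) ^ 2))
      = ∑' n : ℤ, (Real.exp (-(β + 2 * Real.pi * (n : ℝ)) ^ 2 / (4 * α)) : ℂ) := by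
    rw [← (Equiv.neg ℤ).tsum_eq (fun n : ℤ =>
      (Real.exp (-(β + 2 * Real.pi * (n : ℝ)) ^ 2 / (4 * α)) : ℂ))]
    refine tsum_congr fun n => ?_
    rw [Complex.ofReal_exp]
    congr 1
    have hα0 : (α : ℂ) ≠ 0 := by exact_mod_cast hα.ne'
    push_cast
    rw [mul_div_assoc, ← mul_assoc, Complex.I_mul_I]
    field_simp
    simp only [Equiv.neg_apply, Int.cast_neg]
    ring
  -- the coefficient
  have hC : 1 / ((α/π : ℝ) : ℂ) ^ (1/2 : ℂ) = (Real.sqrt (Real.pi / α) : ℂ) := by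
    have h12 : (1/2 : ℂ) = ((1/2:ℝ):ℂ) := by norm_num
    rw [h12, ← Complex.ofReal_cpow ha.le]
    norm_cast
    rw [Real.sqrt_eq_rpow, one_div, ← Real.inv_rpow ha.le]
    congr 1
    rw [inv_div]
  rw [hL, hR, hC] at key
  exact key
end
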